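/- Let (J, U) ∈ Ξ_L^g (U finite-dimensional indecomposable H_J-tempered). Then the induced module I(J, U) = H ⊗_{H_J} U is an indecomposable H-module. -/

import Mathlib

/-!
Statement 17 (Proposition 3.8 of the paper): For `(J, U) ∈ Ξ_L^g` (i.e. `U` a
finite-dimensional indecomposable `H_J`-tempered module), the generalized standard module
`I(J, U) = H ⊗_{H_J} U` is an indecomposable `H`-module.

We formalize the parabolic subalgebra as an algebra `S` with an embedding `φ : S →ₐ[ℂ] H`,
and the induced module `I = I(J,U)` by its characteristic properties: it contains `U` as an
`S`-submodule `P`, it is generated by `P` over `H`, and it satisfies Frobenius reciprocity.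
Temperedness of `U` enters through its consequence (Lemma 3.5 of the paper): the restriction
of `I` to `S` decomposes as `P ⊕ Y` where `Y` has `S`-central characters disjoint from those
of `P`, so that there are no nonzero `S`-homomorphisms between `P` and `Y`.
-/

theorem stmt17
    (H : Type) [Ring H] [Algebra ℂ H]
    (S : Type) [Ring S] [Algebra ℂ S]
    (φ : S →ₐ[ℂ] H) (hφ : Function.Injective φ)
    (I : Type) [AddCommGroup I] [Module ℂ I] [Module H I] [Module S I]
    [FiniteDimensional ℂ I]
    -- the `S`-action on `I` is the restriction along `φ` of the `H`-action
    (hres : ∀ (s : S) (x : I), s • x = φ s • x)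
    -- `P` is the canonical copy `1 ⊗ U` of `U` inside `I(J,U)`
    (P : Submodule S I)
    -- `U` is indecomposable
    (hindec : ∀ p q : Submodule S P, IsCompl p q → p = ⊥ ∨ p = ⊤)
    -- `I(J,U)` is generated by `1 ⊗ U`
    (hgen : Submodule.span H (P : Set I) = ⊤)
    -- Frobenius reciprocity: `Hom_H(I(J,U), M) ≅ Hom_S(U, Res M)`
    (hfrob : ∀ (M : Type) [AddCommGroup M] [Module H M] [Module S M],
      (∀ (s : S) (x : M), s • x = φ s • x) →
      ∀ f : P →ₗ[S] M, ∃! F : I →ₗ[H] M, ∀ x : P, F x = f x)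
    -- consequence of temperedness: `Res_S I(J,U) = P ⊕ Y` with disjoint central characters
    (Y : Submodule S I) (hcompl : IsCompl P Y)
    (hPY : ∀ g : P →ₗ[S] Y, g = 0)
    (hYP : ∀ g : Y →ₗ[S] P, g = 0) :
    ∀ p q : Submodule H I, IsCompl p q → p = ⊥ ∨ p = ⊤ := by
  intro p q hc
  -- H-linear projection onto p along q
  set π : I →ₗ[H] I := p.subtype.comp (p.projectionOnto q hc) with hπ
  have hπp : ∀ x ∈ p, π x = x := fun x hx => by
    simp [hπ, Submodule.projectionOnto_apply_left hc ⟨x, hx⟩]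
  have hπq : ∀ x ∈ q, π x = 0 := fun x hx => by
    simp [hπ, Submodule.projectionOnto_apply_right hc ⟨x, hx⟩]
  have hπmem : ∀ x : I, π x ∈ p := fun x => (p.projectionOnto q hc x).2
  have hπidem : ∀ x : I, π (π x) = π x := fun x => hπp _ (hπmem x)
  -- S-linear version of π
  let πS : I →ₗ[S] I :=
    { toFun := π
      map_add' := π.map_add
      map_smul' := fun s x => by
        simp only [RingHom.id_apply, hres s x, hres s (π x)]
        exact π.map_smul (φ s) x }
  -- projections onto P and Y
  let πP : I →ₗ[S] P := P.projectionOnto Y hcompl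
  let πY : I →ₗ[S] Y := Y.projectionOnto P hcompl.symm
  have hsum : ∀ x : I, ((πP x : I)) + ((πY x : I)) = x := fun x =>
    Submodule.projection_add_projection_eq_self hcompl x
  -- the Y-component of π on P vanishes
  have hg : ∀ x : P, πY (π (x : I)) = 0 := by
    intro x
    have := hPY (πY.comp (πS.comp P.subtype))
    have : (πY.comp (πS.comp P.subtype)) x = 0 := by rw [this]; rfl
    exact this
  have hπP : ∀ x : P, π (x : I) ∈ P := by
    intro x
    have h1 := hsum (π (x : I))
    rw [hg x] at h1
    simp only [ZeroMemClass.coe_zero, add_zero] at h1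
    rw [← h1]; exact (πP (π (x : I))).2
  -- the induced S-endomorphism of P
  let f : P →ₗ[S] P := πP.comp (πS.comp P.subtype)
  have hfcoe : ∀ x : P, ((f x : I)) = π (x : I) := by
    intro x
    show ((πP (π (x : I)) : I)) = π (x : I)
    rw [Submodule.projectionOnto_apply_left hcompl ⟨π (x : I), hπP x⟩]
  have hfidem : ∀ x : P, f (f x) = f x := by
    intro x
    apply Subtype.ext
    rw [hfcoe, hfcoe]
    exact hπidem _
  -- range f and ker f are complementary in P
  have hcompl' : IsCompl (LinearMap.range f) (LinearMap.ker f) := by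
    constructor
    · rw [disjoint_iff_inf_le]
      rintro x ⟨⟨y, rfl⟩, hx2⟩
      have : f (f y) = 0 := hx2
      rw [hfidem] at this
      simp [this]
    · rw [codisjoint_iff_le_sup]
      intro x _
      have : x = f x + (x - f x) := by abel
      rw [this]
      exact Submodule.add_mem_sup ⟨x, rfl⟩ (by simp [LinearMap.mem_ker, map_sub, hfidem])
  rcases hindec _ _ hcompl' with h0 | h1
  · -- f = 0 : π vanishes on P, hence everywhere, so p = ⊥
    left
    have hf0 : ∀ x : P, f x = 0 := fun x => by
      have : f x ∈ LinearMap.range f := ⟨x, rfl⟩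
      rw [h0] at this; simpa using this
    have hπ0 : ∀ x : P, π (x : I) = 0 := by
      intro x
      have h1 := hsum (π (x : I))
      have h2 : ((πP (π (x : I)) : I)) = 0 := by
        have := hf0 x
        have : ((f x : I)) = 0 := by rw [this]; rfl
        exact this
      rw [hg x] at h1
      simp only [ZeroMemClass.coe_zero, add_zero] at h1
      rw [← h1]
      exact h2
    have hker : Submodule.span H (P : Set I) ≤ LinearMap.ker π := by
      rw [Submodule.span_le]
      intro x hx
      exact hπ0 ⟨x, hx⟩
    rw [hgen] at hker
    have hπz : ∀ x : I, π x = 0 := fun x => hker (Submodule.mem_top) 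
    ext x
    simp only [Submodule.mem_bot]
    constructor
    · intro hx
      have := hπp x hx
      rw [hπz x] at this
      exact this.symm
    · rintro rfl; exact p.zero_mem
  · -- f = id : π is identity on P, hence everywhere, so q = ⊥ and p = ⊤
    right
    have hf1 : ∀ x : P, f x = x := by
      intro x
      have hk : LinearMap.ker f = ⊥ := by
        have hd := hcompl'.disjoint
        rw [h1] at hd
        exact top_disjoint.mp hd
      have : f (f x - x) = 0 := by rw [map_sub, hfidem, sub_self]
      have hmem : f x - x ∈ LinearMap.ker f := this
      rw [hk] at hmem
      simpa [sub_eq_zero] using hmem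
    have hπ1 : ∀ x : P, π (x : I) = (x : I) := by
      intro x
      have := hf1 x
      have h2 : ((f x : I)) = (x : I) := by rw [this]
      rw [← hfcoe x, h2]
    -- π - id vanishes on P, hence on all of I
    have hker : Submodule.span H (P : Set I) ≤ LinearMap.ker (π - LinearMap.id) := by
      rw [Submodule.span_le]
      intro x hx
      simp only [SetLike.mem_coe, LinearMap.mem_ker, LinearMap.sub_apply, LinearMap.id_apply,
        sub_eq_zero]
      exact hπ1 ⟨x, hx⟩
    rw [hgen] at hker
    have hπid : ∀ x : I, π x = x := by
      intro x
      have := hker (Submodule.mem_top : x ∈ (⊤ : Submodule H I))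
      simpa [sub_eq_zero] using this
    have hq : q = ⊥ := by
      ext x
      simp only [Submodule.mem_bot]
      constructor
      · intro hx
        have := hπq x hx
        rw [hπid x] at this
        exact this
      · rintro rfl; exact q.zero_mem
    have := hc.codisjoint
    rw [hq, codisjoint_bot] at this
    exact this
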